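/- Let h be an n×n complex matrix and let ρ : ℝ → (n×n complex matrices) be differentiable with ρ'(t) = D_h(ρ(t)) for all t. If ρ(0) is positive semidefinite, then ρ(t) is positive semidefinite for every t ≥ 0. -/

import Mathlib

open Matrix Filter Set Metric
open scoped ComplexOrder Topology

attribute [local instance] Matrix.normedAddCommGroup Matrix.normedSpace

/-- The simple Lindblad generator `D_h`. -/
noncomputable def lindblad {n : ℕ} (h ρ : Matrix (Fin n) (Fin n) ℂ) :
    Matrix (Fin n) (Fin n) ℂ :=
  h * ρ * hᴴ - (1 / 2 : ℂ) • (hᴴ * h * ρ + ρ * (hᴴ * h))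

/-- `lindblad h` as a `ℂ`-linear map. -/
noncomputable def lindbladL {n : ℕ} (h : Matrix (Fin n) (Fin n) ℂ) :
    Matrix (Fin n) (Fin n) ℂ →ₗ[ℂ] Matrix (Fin n) (Fin n) ℂ where
  toFun := lindblad h
  map_add' A B := by
    simp only [lindblad, mul_add, add_mul, smul_add]
    abel
  map_smul' c A := by
    simp only [lindblad, mul_smul_comm, smul_mul_assoc, smul_sub, smul_add, RingHom.id_apply,
      smul_comm c]

lemma lindblad_key {n : ℕ} (h π : Matrix (Fin n) (Fin n) ℂ) {s : ℝ} (hs : 0 ≤ s) :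
    (1 - s • ((1 / 2 : ℂ) • (hᴴ * h))) * π * (1 - s • ((1 / 2 : ℂ) • (hᴴ * h)))ᴴ
      + (Real.sqrt s • h) * π * (Real.sqrt s • h)ᴴ
    = π + s • lindblad h π
      + (s ^ 2) • (((1 / 2 : ℂ) • (hᴴ * h)) * π * ((1 / 2 : ℂ) • (hᴴ * h))) := by
  set K : Matrix (Fin n) (Fin n) ℂ := (1 / 2 : ℂ) • (hᴴ * h) with hKdef
  have hK : (1 - s • K)ᴴ = 1 - s • K := by
    simp [hKdef, conjTranspose_smul, Matrix.conjTranspose_mul, mul_assoc, Complex.ext_iff]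
  have hsqrt : (Real.sqrt s • h) * π * (Real.sqrt s • h)ᴴ = s • (h * π * hᴴ) := by
    rw [conjTranspose_smul]
    simp only [smul_mul_assoc, mul_smul_comm, smul_smul, star_trivial]
    rw [Real.mul_self_sqrt hs]
  have hlin : s • lindblad h π = s • (h * π * hᴴ) - s • (K * π) - s • (π * K) := by
    simp only [lindblad, hKdef, smul_add, smul_sub, smul_mul_assoc, mul_smul_comm, smul_smul]
    module
  rw [hK, hsqrt, hlin]
  have hexp : (1 - s • K) * π * (1 - s • K)
      = π - s • (K * π) - s • (π * K) + (s ^ 2) • (K * π * K) := by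
    simp only [sub_mul, mul_sub, one_mul, mul_one, smul_mul_assoc, mul_smul_comm, smul_smul, sq,
      smul_sub, smul_add]
    module
  rw [hexp]
  module

/-- First-order positivity of the Lindblad flow: moving a PSD matrix a small step `s` along
the Lindblad vector field stays PSD up to an `O(s²)` correction with a fixed matrix. -/
lemma lindblad_approx {n : ℕ} (h π : Matrix (Fin n) (Fin n) ℂ) (hπ : π.PosSemidef)
    {s : ℝ} (hs : 0 ≤ s) :
    ∃ P : Matrix (Fin n) (Fin n) ℂ, P.PosSemidef ∧
      P = π + s • lindblad h π
        + (s ^ 2) • (((1 / 2 : ℂ) • (hᴴ * h)) * π * ((1 / 2 : ℂ) • (hᴴ * h))) := by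
  refine ⟨_, ?_, lindblad_key h π hs⟩
  exact (hπ.mul_mul_conjTranspose_same _).add (hπ.mul_mul_conjTranspose_same _)

theorem stmt1 {n : ℕ} (h : Matrix (Fin n) (Fin n) ℂ)
    (ρ : ℝ → Matrix (Fin n) (Fin n) ℂ)
    (hderiv : ∀ t : ℝ, HasDerivAt ρ (lindblad h (ρ t)) t)
    (h0 : (ρ 0).PosSemidef) :
    ∀ t : ℝ, 0 ≤ t → (ρ t).PosSemidef := by
  haveI := FiniteDimensional.proper ℂ (Matrix (Fin n) (Fin n) ℂ)
  set C : Set (Matrix (Fin n) (Fin n) ℂ) := {M | M.PosSemidef} with hCdef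
  have hCne : C.Nonempty := ⟨0, Matrix.PosSemidef.zero⟩
  -- the PSD cone is closed
  have hCclosed : IsClosed C := by
    have h1 : IsClosed {M : Matrix (Fin n) (Fin n) ℂ | Mᴴ = M} :=
      isClosed_eq (continuous_id.matrix_conjTranspose) continuous_id
    have hz : IsClosed {z : ℂ | 0 ≤ z} := by
      have : {z : ℂ | 0 ≤ z} = Complex.re ⁻¹' Ici 0 ∩ Complex.im ⁻¹' {0} := by
        ext z; simp [Complex.le_def, eq_comm]
      rw [this]
      exact (isClosed_Ici.preimage Complex.continuous_re).inter
        (isClosed_singleton.preimage Complex.continuous_im)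
    have h2 : ∀ v : Fin n → ℂ, IsClosed {M : Matrix (Fin n) (Fin n) ℂ | 0 ≤ star v ⬝ᵥ M *ᵥ v} :=
      fun v => hz.preimage
        (continuous_const.dotProduct (continuous_id.matrix_mulVec continuous_const))
    have : C = {M : Matrix (Fin n) (Fin n) ℂ | Mᴴ = M} ∩ ⋂ v, {M | 0 ≤ star v ⬝ᵥ M *ᵥ v} := by
      ext M
      simp [hCdef, Matrix.posSemidef_iff_dotProduct_mulVec, Matrix.IsHermitian]
    rw [this]
    exact h1.inter (isClosed_iInter h2)
  -- operator norm bound for the Lindblad generator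
  set Lc := (lindbladL h).toContinuousLinearMap with hLc
  letI : Norm (Matrix (Fin n) (Fin n) ℂ →L[ℂ] Matrix (Fin n) (Fin n) ℂ) :=
    ContinuousLinearMap.hasOpNorm
  set c : ℝ := ‖Lc‖ with hc
  have hb : ∀ X : Matrix (Fin n) (Fin n) ℂ, ‖lindblad h X‖ ≤ c * ‖X‖ := fun X => Lc.le_opNorm X
  have hρcont : Continuous ρ :=
    continuous_iff_continuousAt.2 fun t => (hderiv t).continuousAt
  set f : ℝ → ℝ := fun t => infDist (ρ t) C with hf
  have hfcont : Continuous f := (continuous_infDist_pt C).comp hρcont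
  have hfnonneg : ∀ t, 0 ≤ f t := fun t => infDist_nonneg
  intro T hT
  have key : ∀ x ∈ Icc (0:ℝ) T, f x ≤ gronwallBound 0 c 0 (x - 0) := by
    apply le_gronwallBound_of_liminf_deriv_right_le (f' := fun t => c * f t)
      hfcont.continuousOn
    · -- the slope condition
      intro x hx r hr
      obtain ⟨π, hπC, hπd⟩ := hCclosed.exists_infDist_eq_dist hCne (ρ x)
      have hπPSD : π.PosSemidef := hπC
      have hd : ‖ρ x - π‖ = f x := by
        show ‖ρ x - π‖ = infDist (ρ x) C
        rw [hπd, dist_eq_norm]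
      set E : Matrix (Fin n) (Fin n) ℂ :=
        ((1 / 2 : ℂ) • (hᴴ * h)) * π * ((1 / 2 : ℂ) • (hᴴ * h)) with hE
      set ε0 : ℝ := (r - c * f x) / 3 with hε0
      have hε0pos : 0 < ε0 := by
        rw [hε0]; linarith
      have hlo : ∀ᶠ z in 𝓝[>] x, ‖ρ z - ρ x - (z - x) • lindblad h (ρ x)‖ ≤ ε0 * ‖z - x‖ :=
        ((hasDerivAt_iff_isLittleO.1 (hderiv x)).def hε0pos).filter_mono nhdsWithin_le_nhds
      have htend : Tendsto (fun z : ℝ => (z - x) * ‖E‖) (𝓝[>] x) (𝓝 0) := by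
        have h1 : Tendsto (fun z : ℝ => z - x) (𝓝 x) (𝓝 0) := by
          simpa using (continuous_sub_right x).tendsto x
        simpa using (h1.mono_left nhdsWithin_le_nhds).mul_const ‖E‖
      have hsmall : ∀ᶠ z in 𝓝[>] x, (z - x) * ‖E‖ < ε0 := htend.eventually_lt_const hε0pos
      refine (((hlo.and hsmall).and eventually_mem_nhdsWithin).mono ?_).frequently
      rintro z ⟨⟨h1, h2⟩, (hz : x < z)⟩
      have hzx : (0:ℝ) < z - x := sub_pos.2 hz
      obtain ⟨P, hPmem, hPeq⟩ := lindblad_approx h π hπPSD hzx.le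
      have hfz : f z ≤ ‖ρ z - P‖ := by
        rw [← dist_eq_norm]
        exact infDist_le_dist_of_mem hPmem
      have hsub : lindblad h (ρ x - π) = lindblad h (ρ x) - lindblad h π :=
        map_sub (lindbladL h) _ _
      have hsplit : ρ z - P
          = (ρ z - ρ x - (z - x) • lindblad h (ρ x))
            + ((ρ x - π) + (z - x) • lindblad h (ρ x - π)) - ((z - x) ^ 2) • E := by
        rw [hPeq, hsub]
        module
      have e1 : ‖ρ z - P‖ ≤ ‖ρ z - ρ x - (z - x) • lindblad h (ρ x)‖
          + ‖(ρ x - π) + (z - x) • lindblad h (ρ x - π)‖ + ‖((z - x) ^ 2) • E‖ := by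
        rw [hsplit]
        exact (norm_sub_le _ _).trans (add_le_add_left (norm_add_le _ _) _)
      have n1 : ‖(ρ x - π) + (z - x) • lindblad h (ρ x - π)‖
          ≤ f x + (z - x) * (c * f x) := by
        refine (norm_add_le _ _).trans ?_
        have hcd : ‖lindblad h (ρ x - π)‖ ≤ c * f x := by
          simpa [hd] using hb (ρ x - π)
        have : ‖(z - x) • lindblad h (ρ x - π)‖ = (z - x) * ‖lindblad h (ρ x - π)‖ := by
          rw [norm_smul, Real.norm_eq_abs, abs_of_pos hzx]
        rw [hd, this]
        have := mul_le_mul_of_nonneg_left hcd hzx.le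
        linarith
      have n2 : ‖((z - x) ^ 2) • E‖ = (z - x) ^ 2 * ‖E‖ := by
        rw [norm_smul, Real.norm_eq_abs, abs_of_nonneg (sq_nonneg _)]
      have hnz : ‖z - x‖ = z - x := by rw [Real.norm_eq_abs, abs_of_pos hzx]
      rw [hnz] at h1
      rw [inv_mul_lt_iff₀ hzx]
      have hchain : f z - f x ≤ ε0 * (z - x) + (z - x) * (c * f x) + (z - x) ^ 2 * ‖E‖ := by
        have := hfz.trans (e1.trans (by linarith [n1, le_of_eq n2] :
          ‖ρ z - ρ x - (z - x) • lindblad h (ρ x)‖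
            + ‖(ρ x - π) + (z - x) • lindblad h (ρ x - π)‖ + ‖((z - x) ^ 2) • E‖
          ≤ ε0 * (z - x) + (f x + (z - x) * (c * f x)) + (z - x) ^ 2 * ‖E‖))
        linarith
      have hsq : (z - x) ^ 2 * ‖E‖ = (z - x) * ((z - x) * ‖E‖) := by ring
      have h2' : (z - x) * ((z - x) * ‖E‖) ≤ (z - x) * ε0 :=
        mul_le_mul_of_nonneg_left h2.le hzx.le
      have hfin : (z - x) * (2 * ε0 + c * f x) < (z - x) * r :=
        mul_lt_mul_of_pos_left (by rw [hε0]; linarith) hzx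
      nlinarith [hchain, hsq, h2', hfin]
    · -- initial condition
      have : f 0 = 0 := (hCclosed.mem_iff_infDist_zero hCne).1 h0
      exact this.le
    · intro x _
      simp
  have hfT := key T ⟨hT, le_rfl⟩
  rw [sub_zero, gronwallBound_ε0_δ0] at hfT
  have hfT0 : f T = 0 := le_antisymm hfT (hfnonneg T)
  exact (hCclosed.mem_iff_infDist_zero hCne).2 hfT0
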